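/- If 0 → K → F → G → 0 and 0 → K' → F' → G → 0 are two free presentations of a group G, then the quotients (K ∩ [F,F])/[K,F] and (K' ∩ [F',F'])/[K',F'] are isomorphic (independence of the Hopf formula from the chosen presentation). -/

import Mathlib

section Hopf

variable {F₁ F₂ G : Type*} [Group F₁] [Group F₂] [Group G]

/-- The Hopf subgroup `K ⊓ [F,F]`. -/
private def hopfS (f : F₁ →* G) : Subgroup F₁ := f.ker ⊓ commutator F₁

/-- `[K, F]`. -/
private def hopfN (f : F₁ →* G) : Subgroup F₁ := ⁅f.ker, (⊤ : Subgroup F₁)⁆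

private instance hopfN_normal (f : F₁ →* G) : (hopfN f).Normal := by
  unfold hopfN; infer_instance

private lemma map_ker_le (f₁ : F₁ →* G) (f₂ : F₂ →* G) (φ : F₁ →* F₂)
    (hφ : f₂.comp φ = f₁) : (f₁.ker).map φ ≤ f₂.ker := by
  rintro x ⟨y, hy, rfl⟩
  simp only [MonoidHom.mem_ker] at hy ⊢
  have h := congrArg (fun g => g y) hφ
  simp only [MonoidHom.comp_apply] at h
  rw [h, hy]

private lemma map_hopfN_le (f₁ : F₁ →* G) (f₂ : F₂ →* G) (φ : F₁ →* F₂)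
    (hφ : f₂.comp φ = f₁) : (hopfN f₁).map φ ≤ hopfN f₂ := by
  rw [hopfN, Subgroup.map_commutator]
  exact Subgroup.commutator_mono (map_ker_le f₁ f₂ φ hφ) le_top

private lemma map_hopfS_le (f₁ : F₁ →* G) (f₂ : F₂ →* G) (φ : F₁ →* F₂)
    (hφ : f₂.comp φ = f₁) : (hopfS f₁).map φ ≤ hopfS f₂ := by
  rintro x ⟨y, hy, rfl⟩
  obtain ⟨hy1, hy2⟩ := hy
  refine ⟨map_ker_le f₁ f₂ φ hφ ⟨y, hy1, rfl⟩, ?_⟩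
  have h2 : ((commutator F₁).map φ) ≤ commutator F₂ := by
    rw [commutator, commutator, Subgroup.map_commutator]
    exact Subgroup.commutator_mono le_top le_top
  exact h2 ⟨y, hy2, rfl⟩

/-- The induced map on Hopf quotients. -/
private def hopfMap (f₁ : F₁ →* G) (f₂ : F₂ →* G) (φ : F₁ →* F₂)
    (hφ : f₂.comp φ = f₁) :
    (↥(hopfS f₁) ⧸ (hopfN f₁).subgroupOf (hopfS f₁)) →*
      (↥(hopfS f₂) ⧸ (hopfN f₂).subgroupOf (hopfS f₂)) :=
  QuotientGroup.lift _
    ((QuotientGroup.mk' _).comp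
      ((φ.domRestrict (hopfS f₁)).codRestrict (hopfS f₂)
        (fun x => map_hopfS_le f₁ f₂ φ hφ ⟨x, x.2, rfl⟩)))
    (by
      intro x hx
      rw [Subgroup.mem_subgroupOf] at hx
      rw [MonoidHom.mem_ker]
      simp only [MonoidHom.comp_apply, QuotientGroup.mk'_apply]
      rw [QuotientGroup.eq_one_iff]
      rw [Subgroup.mem_subgroupOf]
      exact map_hopfN_le f₁ f₂ φ hφ ⟨x, hx, rfl⟩)

private lemma hopfMap_mk (f₁ : F₁ →* G) (f₂ : F₂ →* G) (φ : F₁ →* F₂)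
    (hφ : f₂.comp φ = f₁) (x : ↥(hopfS f₁)) :
    hopfMap f₁ f₂ φ hφ (QuotientGroup.mk x) =
      QuotientGroup.mk ⟨φ x, map_hopfS_le f₁ f₂ φ hφ ⟨x, x.2, rfl⟩⟩ := rfl

open scoped commutatorElement in
/-- Two lifts of the same map induce the same map on Hopf quotients. -/
private lemma hopfMap_eq (f₁ : F₁ →* G) (f₂ : F₂ →* G) (φ : F₁ →* F₂)
    (hφ : f₂.comp φ = f₁) (ψ : F₁ →* F₂) (hψ : f₂.comp ψ = f₁) :
    hopfMap f₁ f₂ φ hφ = hopfMap f₁ f₂ ψ hψ := by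
  -- work in F₂ ⧸ [K₂, F₂]
  let π : F₂ →* F₂ ⧸ hopfN f₂ := QuotientGroup.mk' _
  have hker_central : ∀ k ∈ f₂.ker, π k ∈ Subgroup.center (F₂ ⧸ hopfN f₂) := by
    intro k hk
    rw [Subgroup.mem_center_iff]
    intro b
    induction b using QuotientGroup.induction_on with
    | H y =>
      have hm : ⁅k, y⁆ ∈ hopfN f₂ := Subgroup.commutator_mem_commutator hk (Subgroup.mem_top y)
      have h1 : π ⁅k, y⁆ = 1 := by
        exact (QuotientGroup.eq_one_iff _).mpr hm
      rw [map_commutatorElement] at h1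
      have := commutatorElement_eq_one_iff_mul_comm.mp h1
      simpa [π] using this.symm
  have hcent : ∀ x : F₁, π (φ x) * (π (ψ x))⁻¹ ∈ Subgroup.center (F₂ ⧸ hopfN f₂) := by
    intro x
    rw [← map_inv, ← map_mul]
    apply hker_central
    rw [MonoidHom.mem_ker, map_mul, map_inv]
    have h1 : f₂ (φ x) = f₁ x := congrArg (fun g => g x) hφ
    have h2 : f₂ (ψ x) = f₁ x := congrArg (fun g => g x) hψ
    rw [h1, h2, mul_inv_cancel]
  -- the difference is a homomorphism into the center
  let c : F₁ →* F₂ ⧸ hopfN f₂ :=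
    { toFun := fun x => π (φ x) * (π (ψ x))⁻¹
      map_one' := by simp
      map_mul' := by
        intro x y
        have hy := hcent y
        rw [Subgroup.mem_center_iff] at hy
        simp only [map_mul, mul_inv_rev]
        calc π (φ x) * π (φ y) * ((π (ψ y))⁻¹ * (π (ψ x))⁻¹)
            = π (φ x) * ((π (ψ x))⁻¹ * (π (φ y) * (π (ψ y))⁻¹)) := by
              rw [hy ((π (ψ x))⁻¹)]; group
          _ = π (φ x) * (π (ψ x))⁻¹ * (π (φ y) * (π (ψ y))⁻¹) := by group }
  have hc : commutator F₁ ≤ c.ker := by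
    rw [commutator, Subgroup.commutator_le]
    intro a _ b _
    rw [MonoidHom.mem_ker, map_commutatorElement]
    have ha := hcent a
    rw [Subgroup.mem_center_iff] at ha
    exact commutatorElement_eq_one_iff_mul_comm.mpr (ha _).symm
  have key : ∀ x : F₁, x ∈ commutator F₁ → π (φ x) = π (ψ x) := by
    intro x hx
    have h0 : c x = 1 := hc hx
    simp only [c, MonoidHom.coe_mk, OneHom.coe_mk] at h0
    exact mul_inv_eq_one.mp h0
  -- conclude
  refine MonoidHom.ext fun q => ?_
  induction q using QuotientGroup.induction_on with
  | H y =>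
    rw [hopfMap_mk, hopfMap_mk, QuotientGroup.eq, Subgroup.mem_subgroupOf]
    have hy : π (φ y) = π (ψ y) := key y y.2.2
    have hmem : ((φ y)⁻¹ * ψ y : F₂) ∈ hopfN f₂ := by
      rw [← QuotientGroup.eq]
      exact hy
    simpa using hmem

variable {F₃ : Type*} [Group F₃]

private lemma hopfMap_comp (f₁ : F₁ →* G) (f₂ : F₂ →* G) (f₃ : F₃ →* G)
    (φ : F₁ →* F₂) (hφ : f₂.comp φ = f₁) (ψ : F₂ →* F₃) (hψ : f₃.comp ψ = f₂) :
    (hopfMap f₂ f₃ ψ hψ).comp (hopfMap f₁ f₂ φ hφ) =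
      hopfMap f₁ f₃ (ψ.comp φ) (by rw [← hφ, ← hψ]; rfl) := by
  refine MonoidHom.ext fun q => ?_
  induction q using QuotientGroup.induction_on with
  | H y => rfl

private lemma hopfMap_id (f₁ : F₁ →* G) :
    hopfMap f₁ f₁ (MonoidHom.id F₁) (by rfl) = MonoidHom.id _ := by
  refine MonoidHom.ext fun q => ?_
  induction q using QuotientGroup.induction_on with
  | H y => rfl

end Hopf

/-- If `0 → K → F → G → 0` and `0 → K' → F' → G → 0` are two free presentations of a group
`G`, then `(K ⊓ [F,F])/[K,F]` and `(K' ⊓ [F',F'])/[K',F']` are isomorphic. -/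
theorem hopf_formula_independent_of_presentation
    (α α' : Type*) (G : Type*) [Group G]
    (f : FreeGroup α →* G) (hf : Function.Surjective f)
    (f' : FreeGroup α' →* G) (hf' : Function.Surjective f') :
    Nonempty
      ((↥(f.ker ⊓ commutator (FreeGroup α)) ⧸
          (⁅f.ker, (⊤ : Subgroup (FreeGroup α))⁆.subgroupOf
            (f.ker ⊓ commutator (FreeGroup α)))) ≃*
       (↥(f'.ker ⊓ commutator (FreeGroup α')) ⧸
          (⁅f'.ker, (⊤ : Subgroup (FreeGroup α'))⁆.subgroupOf
            (f'.ker ⊓ commutator (FreeGroup α'))))) := by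
  let φ : FreeGroup α →* FreeGroup α' :=
    FreeGroup.lift fun a => Classical.choose (hf' (f (FreeGroup.of a)))
  have hφ : f'.comp φ = f := by
    apply FreeGroup.ext_hom
    intro a
    simpa [φ] using Classical.choose_spec (hf' (f (FreeGroup.of a)))
  let ψ : FreeGroup α' →* FreeGroup α :=
    FreeGroup.lift fun a => Classical.choose (hf (f' (FreeGroup.of a)))
  have hψ : f.comp ψ = f' := by
    apply FreeGroup.ext_hom
    intro a
    simpa [ψ] using Classical.choose_spec (hf (f' (FreeGroup.of a)))
  have h1 : (hopfMap f' f ψ hψ).comp (hopfMap f f' φ hφ) = MonoidHom.id _ := by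
    rw [hopfMap_comp f f' f φ hφ ψ hψ]
    rw [hopfMap_eq f f (ψ.comp φ) _ (MonoidHom.id _) (by rfl)]
    exact hopfMap_id f
  have h2 : (hopfMap f f' φ hφ).comp (hopfMap f' f ψ hψ) = MonoidHom.id _ := by
    rw [hopfMap_comp f' f f' ψ hψ φ hφ]
    rw [hopfMap_eq f' f' (φ.comp ψ) _ (MonoidHom.id _) (by rfl)]
    exact hopfMap_id f'
  exact ⟨MonoidHom.toMulEquiv (hopfMap f f' φ hφ) (hopfMap f' f ψ hψ) h1 h2⟩
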